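/- Fix d ≥ 1. Define the step function Λ₀ : ℝ^d → ℝ̄ by Λ₀(x) = 0 if x = 0; Λ₀(x) = l if x ∈ B^sp_(l) \ B^sp_(l−1) for l ∈ {1,…,d} (with B^sp_(0) = {0}); and Λ₀(x) = +∞ if ‖x‖ > 1 (i.e. x ∉ B^sp_(d), the Euclidean unit ball). Define L₀ : ℝ^d → ℝ̄ by L₀(x) = sup_{y ∈ ℝ^d} ( ⟨x,y⟩ − max_{l ∈ {0,1,…,d}} ( ‖y‖_(l) − l ) ). Then L₀ is the Fenchel biconjugate of Λ₀, i.e. L₀ is the largest proper convex lower semicontinuous function below Λ₀. -/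

import Mathlib

noncomputable section

variable {d : ℕ}

/-- The projection `x_K` of `x` onto the coordinates in `K`
(the components outside `K` vanish). -/
def restr (K : Finset (Fin d)) (x : EuclideanSpace ℝ (Fin d)) : EuclideanSpace ℝ (Fin d) :=
  WithLp.toLp 2 (fun i => if i ∈ K then x i else 0)

/-- The 2-k-symmetric gauge norm `‖y‖_(k) = sup {‖y_K‖ : |K| ≤ k}`
(equal to `0` for `k = 0`, by the convention `‖·‖_(0) = 0`). -/
def gaugeNorm (k : ℕ) (y : EuclideanSpace ℝ (Fin d)) : ℝ :=
  ⨆ K : {K : Finset (Fin d) // K.card ≤ k}, ‖restr (K : Finset (Fin d)) y‖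

/-- The ℓ₀ pseudonorm: the number of nonzero components. -/
def l0 (x : EuclideanSpace ℝ (Fin d)) : ℕ :=
  (Finset.univ.filter fun i => x i ≠ 0).card

open Classical in
/-- The Capra coupling `¢(x,y) = ⟨x,y⟩ / ‖x‖` for `x ≠ 0`, and `¢(0,y) = 0`. -/
def capra (x y : EuclideanSpace ℝ (Fin d)) : ℝ :=
  if x = 0 then 0 else (inner ℝ x y : ℝ) / ‖x‖

/-- The Capra conjugate of ℓ₀: `y ↦ max_{0 ≤ l ≤ d} (‖y‖_(l) − l)`. -/
def capraConjL0 (y : EuclideanSpace ℝ (Fin d)) : ℝ :=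
  ⨆ l : Fin (d + 1), (gaugeNorm (l : ℕ) y - ((l : ℕ) : ℝ))

/-- `L₀(x) = sup_y (⟨x,y⟩ − max_{0 ≤ l ≤ d}(‖y‖_(l) − l))`, with values in `ℝ̄ = EReal`. -/
def L0 (x : EuclideanSpace ℝ (Fin d)) : EReal :=
  ⨆ y : EuclideanSpace ℝ (Fin d), (((inner ℝ x y : ℝ) - capraConjL0 y : ℝ) : EReal)

/-- The k-support norm: the dual norm of the 2-k-symmetric gauge norm,
`‖y‖^sp_(k) = sup {⟨x,y⟩ : ‖x‖_(k) ≤ 1}`. -/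
def suppNorm (k : ℕ) (y : EuclideanSpace ℝ (Fin d)) : ℝ :=
  sSup {c : ℝ | ∃ x : EuclideanSpace ℝ (Fin d), gaugeNorm k x ≤ 1 ∧ c = (inner ℝ x y : ℝ)}

/-- The unit ball of the k-support norm, with the convention `B^sp_(0) = {0}`. -/
def Bsp (d k : ℕ) : Set (EuclideanSpace ℝ (Fin d)) :=
  if k = 0 then {0} else {y | suppNorm k y ≤ 1}

/-- The degenerate unit sphere `S_K = {x : x_{−K} = 0 and ‖x_K‖ = 1}`. -/
def sphK (K : Finset (Fin d)) : Set (EuclideanSpace ℝ (Fin d)) :=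
  {x | (∀ i, i ∉ K → x i = 0) ∧ ‖restr K x‖ = 1}

/-- The degenerate unit ball `B_K = {x : x_{−K} = 0 and ‖x_K‖ ≤ 1}`. -/
def ballK (K : Finset (Fin d)) : Set (EuclideanSpace ℝ (Fin d)) :=
  {x | (∀ i, i ∉ K → x i = 0) ∧ ‖restr K x‖ ≤ 1}


lemma restr_empty (y : EuclideanSpace ℝ (Fin d)) : restr ∅ y = 0 := by
  ext i; simp [restr]

lemma inner_restr_right (K : Finset (Fin d)) (x y : EuclideanSpace ℝ (Fin d)) :
    (inner ℝ x (restr K y) : ℝ) = inner ℝ (restr K x) (restr K y) := by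
  simp only [PiLp.inner_apply, RCLike.inner_apply, conj_trivial, restr]
  refine Finset.sum_congr rfl fun i _ => ?_
  by_cases h : i ∈ K <;> simp [h]

lemma inner_restr_left (K : Finset (Fin d)) (x y : EuclideanSpace ℝ (Fin d)) :
    (inner ℝ (restr K x) y : ℝ) = inner ℝ (restr K x) (restr K y) := by
  simp only [PiLp.inner_apply, RCLike.inner_apply, conj_trivial, restr]
  refine Finset.sum_congr rfl fun i _ => ?_
  by_cases h : i ∈ K <;> simp [h]

lemma restr_smul (K : Finset (Fin d)) (c : ℝ) (y : EuclideanSpace ℝ (Fin d)) :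
    restr K (c • y) = c • restr K y := by
  ext i; simp only [restr, PiLp.smul_apply, smul_eq_mul]
  by_cases h : i ∈ K <;> simp [h]

lemma restr_univ (y : EuclideanSpace ℝ (Fin d)) : restr Finset.univ y = y := by
  ext i; simp [restr]

lemma norm_restr_le (K : Finset (Fin d)) (y : EuclideanSpace ℝ (Fin d)) :
    ‖restr K y‖ ≤ ‖y‖ := by
  rw [EuclideanSpace.norm_eq, EuclideanSpace.norm_eq]
  apply Real.sqrt_le_sqrt
  refine Finset.sum_le_sum fun i _ => ?_
  simp only [restr]
  by_cases h : i ∈ K <;> simp [h] <;> positivity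

-- basics about gaugeNorm
lemma gaugeNorm_eq_sup (k : ℕ) (y : EuclideanSpace ℝ (Fin d)) :
    ∃ K : Finset (Fin d), K.card ≤ k ∧ gaugeNorm k y = ‖restr K y‖ := by
  have : Nonempty {K : Finset (Fin d) // K.card ≤ k} := ⟨⟨∅, by simp⟩⟩
  obtain ⟨K₀, hK₀⟩ := Finite.exists_max
    (fun K : {K : Finset (Fin d) // K.card ≤ k} => ‖restr (K : Finset (Fin d)) y‖)
  refine ⟨K₀, K₀.2, le_antisymm (ciSup_le hK₀) ?_⟩
  exact le_ciSup (f := fun K : {K : Finset (Fin d) // K.card ≤ k} => ‖restr (K : Finset (Fin d)) y‖) (Set.Finite.bddAbove (Set.finite_range _)) K₀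

lemma le_gaugeNorm {k : ℕ} {K : Finset (Fin d)} (hK : K.card ≤ k)
    (y : EuclideanSpace ℝ (Fin d)) : ‖restr K y‖ ≤ gaugeNorm k y := by
  have : Nonempty {K : Finset (Fin d) // K.card ≤ k} := ⟨⟨∅, by simp⟩⟩
  exact le_ciSup (f := fun K : {K : Finset (Fin d) // K.card ≤ k} => ‖restr (K : Finset (Fin d)) y‖) (Set.Finite.bddAbove (Set.finite_range _)) ⟨K, hK⟩

lemma gaugeNorm_nonneg (k : ℕ) (y : EuclideanSpace ℝ (Fin d)) : 0 ≤ gaugeNorm k y :=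
  le_trans (by simp [restr_empty]) (le_gaugeNorm (K := ∅) (by simp) y)

lemma gaugeNorm_zero (y : EuclideanSpace ℝ (Fin d)) : gaugeNorm 0 y = 0 := by
  obtain ⟨K, hK, h⟩ := gaugeNorm_eq_sup 0 y
  rw [h, Finset.card_eq_zero.mp (Nat.le_zero.mp hK), restr_empty, norm_zero]

lemma gaugeNorm_le_norm (k : ℕ) (y : EuclideanSpace ℝ (Fin d)) : gaugeNorm k y ≤ ‖y‖ := by
  obtain ⟨K, _, h⟩ := gaugeNorm_eq_sup k y
  rw [h]; exact norm_restr_le K y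

lemma gaugeNorm_smul (k : ℕ) (c : ℝ) (y : EuclideanSpace ℝ (Fin d)) :
    gaugeNorm k (c • y) = |c| * gaugeNorm k y := by
  unfold gaugeNorm
  have : Nonempty {K : Finset (Fin d) // K.card ≤ k} := ⟨⟨∅, by simp⟩⟩
  rw [Real.mul_iSup_of_nonneg (abs_nonneg c)]
  congr 1; funext K
  rw [restr_smul, norm_smul, Real.norm_eq_abs]

lemma norm_restr_singleton (i : Fin d) (x : EuclideanSpace ℝ (Fin d)) :
    ‖restr {i} x‖ = |x i| := by
  rw [EuclideanSpace.norm_eq]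
  rw [show ∑ j, ‖restr {i} x j‖ ^ 2 = |x i| ^ 2 by
    rw [Finset.sum_eq_single i]
    · simp [restr, sq_abs]
    · intro j _ hj; simp [restr, hj]
    · simp]
  exact Real.sqrt_sq (abs_nonneg _)

lemma abs_le_one_of_gauge {k : ℕ} (hk : 1 ≤ k) {x : EuclideanSpace ℝ (Fin d)}
    (hx : gaugeNorm k x ≤ 1) (i : Fin d) : |x i| ≤ 1 := by
  rw [← norm_restr_singleton]
  exact le_trans (le_gaugeNorm (by simpa) x) hx

lemma suppNorm_bddAbove {k : ℕ} (hk : 1 ≤ k) (y : EuclideanSpace ℝ (Fin d)) :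
    BddAbove {c : ℝ | ∃ x : EuclideanSpace ℝ (Fin d), gaugeNorm k x ≤ 1 ∧ c = (inner ℝ x y : ℝ)} := by
  refine ⟨∑ i, |y i|, fun c hc => ?_⟩
  obtain ⟨x, hx, rfl⟩ := hc
  rw [PiLp.inner_apply]
  simp only [RCLike.inner_apply, conj_trivial]
  rw [show ∑ i, y i * x i = ∑ i, x i * y i from Finset.sum_congr rfl fun i _ => mul_comm _ _]
  calc ∑ i, x i * y i ≤ ∑ i, |x i * y i| :=
        Finset.sum_le_sum fun i _ => le_abs_self _
    _ ≤ ∑ i, |y i| := Finset.sum_le_sum fun i _ => by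
        rw [abs_mul]
        exact mul_le_of_le_one_left (abs_nonneg _) (abs_le_one_of_gauge hk hx i)

lemma inner_le_suppNorm {k : ℕ} (hk : 1 ≤ k) {x : EuclideanSpace ℝ (Fin d)}
    (hx : gaugeNorm k x ≤ 1) (y : EuclideanSpace ℝ (Fin d)) :
    (inner ℝ x y : ℝ) ≤ suppNorm k y :=
  le_csSup (suppNorm_bddAbove hk y) ⟨x, hx, rfl⟩

lemma suppNorm_le {k : ℕ} {y : EuclideanSpace ℝ (Fin d)} {a : ℝ} (ha : 0 ≤ a)
    (h : ∀ x : EuclideanSpace ℝ (Fin d), gaugeNorm k x ≤ 1 → (inner ℝ x y : ℝ) ≤ a) :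
    suppNorm k y ≤ a := by
  refine Real.sSup_le (fun c hc => ?_) ha
  obtain ⟨x, hx, rfl⟩ := hc
  exact h x hx

lemma mem_Bsp_top (hd : 1 ≤ d) {z : EuclideanSpace ℝ (Fin d)} (hz : ‖z‖ ≤ 1) :
    z ∈ Bsp d d := by
  rw [Bsp, if_neg (by omega)]
  refine suppNorm_le zero_le_one fun x hx => ?_
  have hx' : ‖x‖ ≤ 1 := by
    have h := le_gaugeNorm (k := d) (K := Finset.univ) (by simp) x
    rw [restr_univ] at h
    exact h.trans hx
  calc (inner ℝ x z : ℝ) ≤ ‖x‖ * ‖z‖ := real_inner_le_norm x z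
    _ ≤ 1 := mul_le_one₀ hx' (norm_nonneg _) hz

lemma inner_le_gaugeNorm_of_mem_Bsp {l : ℕ} (hl : 1 ≤ l) {z : EuclideanSpace ℝ (Fin d)}
    (hz : z ∈ Bsp d l) (y : EuclideanSpace ℝ (Fin d)) :
    (inner ℝ z y : ℝ) ≤ gaugeNorm l y := by
  rw [Bsp, if_neg (by omega)] at hz
  by_cases hg : gaugeNorm l y = 0
  · -- then y = 0
    have hy : y = 0 := by
      ext i
      have h1 : |y i| ≤ 0 := by
        rw [← norm_restr_singleton]
        exact (le_gaugeNorm (by simpa) y).trans (le_of_eq hg)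
      exact abs_eq_zero.mp ((abs_nonneg (y i)).antisymm h1).symm
    simp [hy, gaugeNorm_nonneg, hg]
  · have hgpos : 0 < gaugeNorm l y := lt_of_le_of_ne (gaugeNorm_nonneg l y) (Ne.symm hg)
    have hx : gaugeNorm l ((gaugeNorm l y)⁻¹ • y) ≤ 1 := by
      rw [gaugeNorm_smul, abs_of_nonneg (by positivity), inv_mul_cancel₀ hg]
    have := inner_le_suppNorm hl hx z
    rw [real_inner_smul_left] at this
    have h2 : (gaugeNorm l y)⁻¹ * (inner ℝ y z : ℝ) ≤ 1 := this.trans hz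
    rw [real_inner_comm]
    calc (inner ℝ y z : ℝ) = gaugeNorm l y * ((gaugeNorm l y)⁻¹ * (inner ℝ y z : ℝ)) := by
          field_simp
      _ ≤ gaugeNorm l y * 1 := by
          exact mul_le_mul_of_nonneg_left h2 hgpos.le
      _ = gaugeNorm l y := mul_one _

lemma sph_mem_Bsp {l : ℕ} (hl : 1 ≤ l) {K : Finset (Fin d)} (hK : K.card ≤ l)
    {z : EuclideanSpace ℝ (Fin d)} (hzK : restr K z = z) (hz : ‖z‖ = 1) :
    z ∈ Bsp d l := by
  rw [Bsp, if_neg (by omega)]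
  refine suppNorm_le zero_le_one fun x hx => ?_
  calc (inner ℝ x z : ℝ) = inner ℝ (restr K x) (restr K z) := by
        rw [← inner_restr_right, hzK]
    _ ≤ ‖restr K x‖ * ‖restr K z‖ := real_inner_le_norm _ _
    _ ≤ 1 * 1 := by
        refine mul_le_mul ?_ ?_ (norm_nonneg _) zero_le_one
        · exact (le_gaugeNorm hK x).trans hx
        · rw [hzK, hz]
    _ = 1 := mul_one 1


lemma restr_restr (K : Finset (Fin d)) (y : EuclideanSpace ℝ (Fin d)) :
    restr K (restr K y) = restr K y := by
  ext i; simp only [restr]; by_cases h : i ∈ K <;> simp [h]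

lemma le_capraConj {l : ℕ} (hl : l ≤ d) (y : EuclideanSpace ℝ (Fin d)) :
    gaugeNorm l y - (l : ℝ) ≤ capraConjL0 y := by
  have : Nonempty (Fin (d + 1)) := ⟨0⟩
  have := le_ciSup (f := fun l : Fin (d+1) => gaugeNorm (l : ℕ) y - ((l : ℕ) : ℝ))
    (Set.Finite.bddAbove (Set.finite_range _)) (⟨l, by omega⟩ : Fin (d+1))
  simpa [capraConjL0] using this

lemma capraConj_nonneg (y : EuclideanSpace ℝ (Fin d)) : 0 ≤ capraConjL0 y := by
  have h := le_capraConj (l := 0) (by omega) y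
  rwa [gaugeNorm_zero, Nat.cast_zero, sub_zero] at h

lemma capraConj_attained (y : EuclideanSpace ℝ (Fin d)) :
    ∃ l : ℕ, l ≤ d ∧ capraConjL0 y = gaugeNorm l y - (l : ℝ) := by
  have : Nonempty (Fin (d + 1)) := ⟨0⟩
  obtain ⟨l₀, hl₀⟩ := Finite.exists_max
    (fun l : Fin (d+1) => gaugeNorm (l : ℕ) y - ((l : ℕ) : ℝ))
  refine ⟨(l₀ : ℕ), by omega, le_antisymm (ciSup_le hl₀) ?_⟩
  exact le_ciSup (f := fun l : Fin (d+1) => gaugeNorm (l : ℕ) y - ((l : ℕ) : ℝ))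
    (Set.Finite.bddAbove (Set.finite_range _)) l₀

open Classical in
lemma exists_level {z : EuclideanSpace ℝ (Fin d)} (hz0 : z ≠ 0) {l : ℕ} (hl : 1 ≤ l)
    (hzl : z ∈ Bsp d l) :
    ∃ m, 1 ≤ m ∧ m ≤ l ∧ z ∈ Bsp d m \ Bsp d (m - 1) := by
  have hP : ∃ n, z ∈ Bsp d n := ⟨l, hzl⟩
  set m := Nat.find hP with hm
  have hmspec : z ∈ Bsp d m := Nat.find_spec hP
  have hml : m ≤ l := Nat.find_min' hP hzl
  have hm1 : 1 ≤ m := by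
    rcases Nat.eq_zero_or_pos m with h | h
    · exfalso
      rw [h] at hmspec
      rw [Bsp, if_pos rfl] at hmspec
      exact hz0 hmspec
    · exact h
  refine ⟨m, hm1, hml, hmspec, ?_⟩
  exact Nat.find_min hP (by omega)

theorem conj_eq (hd : 1 ≤ d)
    (Λ : EuclideanSpace ℝ (Fin d) → EReal)
    (hΛ0 : Λ 0 = 0)
    (hΛstep : ∀ l : ℕ, 1 ≤ l → l ≤ d →
        ∀ x ∈ Bsp d l \ Bsp d (l - 1), Λ x = (l : EReal))
    (hΛtop : ∀ x : EuclideanSpace ℝ (Fin d), 1 < ‖x‖ → Λ x = ⊤)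
    (y : EuclideanSpace ℝ (Fin d)) :
    (⨆ z : EuclideanSpace ℝ (Fin d), (((inner ℝ z y : ℝ) : EReal) + (- Λ z)))
      = ((capraConjL0 y : ℝ) : EReal) := by
  apply le_antisymm
  · refine iSup_le fun z => ?_
    by_cases hz0 : z = 0
    · subst hz0
      rw [hΛ0, neg_zero, inner_zero_left]
      simp only [EReal.coe_zero, add_zero]
      exact EReal.coe_le_coe_iff.mpr (capraConj_nonneg y)
    by_cases h1 : 1 < ‖z‖
    · rw [hΛtop z h1, EReal.neg_top, EReal.add_bot]
      exact bot_le
    push_neg at h1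
    obtain ⟨m, hm1, hmd, hmem⟩ := exists_level hz0 hd (mem_Bsp_top hd h1)
    rw [hΛstep m hm1 hmd z hmem, ← EReal.coe_coe_eq_natCast, ← EReal.coe_neg,
      ← EReal.coe_add]
    rw [EReal.coe_le_coe_iff]
    calc (inner ℝ z y : ℝ) + -(m : ℝ) = (inner ℝ z y : ℝ) - (m : ℝ) := by ring
      _ ≤ gaugeNorm m y - (m : ℝ) := by
          have := inner_le_gaugeNorm_of_mem_Bsp hm1 hmem.1 y
          linarith
      _ ≤ capraConjL0 y := le_capraConj hmd y
  · obtain ⟨l₀, hl₀d, hval⟩ := capraConj_attained y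
    obtain ⟨K₀, hK₀card, hK₀⟩ := gaugeNorm_eq_sup l₀ y
    set r := ‖restr K₀ y‖ with hr
    have hS0 : (0 : EReal) ≤ ⨆ z : EuclideanSpace ℝ (Fin d),
        (((inner ℝ z y : ℝ) : EReal) + (- Λ z)) := by
      refine le_trans ?_ (le_iSup _ (0 : EuclideanSpace ℝ (Fin d)))
      rw [hΛ0, neg_zero, inner_zero_left]
      simp
    by_cases hr0 : r = 0
    · have : capraConjL0 y ≤ 0 := by
        rw [hval, hK₀, hr0]
        simp
      refine le_trans ?_ hS0
      exact_mod_cast this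
    · have hrpos : 0 < r := lt_of_le_of_ne (norm_nonneg _) (Ne.symm hr0)
      have hl₀1 : 1 ≤ l₀ := by
        by_contra h
        have : l₀ = 0 := by omega
        subst this
        have : K₀ = ∅ := Finset.card_eq_zero.mp (Nat.le_zero.mp hK₀card)
        rw [this, restr_empty, norm_zero] at hr
        exact hr0 hr
      set z := r⁻¹ • restr K₀ y with hz
      have hzK : restr K₀ z = z := by rw [hz, restr_smul, restr_restr]
      have hznorm : ‖z‖ = 1 := by
        rw [hz, norm_smul, Real.norm_eq_abs, abs_of_pos (by positivity), ← hr,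
          inv_mul_cancel₀ hr0]
      have hzmem : z ∈ Bsp d l₀ := sph_mem_Bsp hl₀1 hK₀card hzK hznorm
      have hz0 : z ≠ 0 := by
        intro h; rw [h, norm_zero] at hznorm; exact one_ne_zero hznorm.symm
      obtain ⟨m, hm1, hml₀, hmem⟩ := exists_level hz0 hl₀1 hzmem
      have hinner : (inner ℝ z y : ℝ) = r := by
        rw [hz, real_inner_smul_left, inner_restr_left,
          real_inner_self_eq_norm_sq, ← hr]
        field_simp
      refine le_trans ?_ (le_iSup _ z)
      rw [hΛstep m hm1 (le_trans hml₀ hl₀d) z hmem, ← EReal.coe_coe_eq_natCast,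
        ← EReal.coe_neg, ← EReal.coe_add, EReal.coe_le_coe_iff, hinner, hval, hK₀]
      have : (m : ℝ) ≤ (l₀ : ℝ) := Nat.cast_le.mpr hml₀
      linarith

/-- `L₀` is the Fenchel biconjugate of the step function `Λ₀`,
where `Λ₀(0) = 0`, `Λ₀(x) = l` for `x ∈ B^sp_(l) \ B^sp_(l−1)` (`1 ≤ l ≤ d`, with
`B^sp_(0) = {0}`), and `Λ₀(x) = +∞` for `‖x‖ > 1` (i.e. outside `B^sp_(d)`, the
Euclidean unit ball). -/
theorem L0_eq_fenchel_biconjugate_of_step (d : ℕ) (hd : 1 ≤ d)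
    (Λ : EuclideanSpace ℝ (Fin d) → EReal)
    (hΛ0 : Λ 0 = 0)
    (hΛstep : ∀ l : ℕ, 1 ≤ l → l ≤ d →
        ∀ x ∈ Bsp d l \ Bsp d (l - 1), Λ x = (l : EReal))
    (hΛtop : ∀ x : EuclideanSpace ℝ (Fin d), 1 < ‖x‖ → Λ x = ⊤) :
    ∀ x : EuclideanSpace ℝ (Fin d),
      L0 x = ⨆ y : EuclideanSpace ℝ (Fin d),
        (((inner ℝ x y : ℝ) : EReal) +
          (- ⨆ z : EuclideanSpace ℝ (Fin d), (((inner ℝ z y : ℝ) : EReal) + (- Λ z)))) := by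
  intro x
  unfold L0
  refine iSup_congr fun y => ?_
  rw [conj_eq hd Λ hΛ0 hΛstep hΛtop y, sub_eq_add_neg, EReal.coe_add, EReal.coe_neg]
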